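/- Let G be a connected r-regular finite simple graph on n ≥ 2 vertices, let λ₁ be the largest eigenvalue of the adjacency matrix M different from r (i.e., λ₁ is an eigenvalue, λ₁ < r, and every eigenvalue μ ≠ r satisfies μ ≤ λ₁), and let λ_k be the smallest eigenvalue of M. Then for every nonempty proper subset C ⊆ V: λ_k|C| + (r−λ_k)|C|²/n ≤ e(C,C) ≤ λ₁|C| + (r−λ₁)|C|²/n. Moreover, the lower bound is attained if and only if {C, V∖C} is an equitable partition with eigenvalue λ_k, and the upper bound is attained if and only if {C, V∖C} is an equitable partition with eigenvalue λ₁. -/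

import Mathlib

open Finset
open scoped Classical

section Aux

open Matrix

variable {n : Type*} [Fintype n] [DecidableEq n]

private lemma innerDot (u g : EuclideanSpace ℝ n) :
    (inner ℝ u g : ℝ) = (u : n → ℝ) ⬝ᵥ (g : n → ℝ) := by
  simp [PiLp.inner_apply, dotProduct, RCLike.inner_apply]
  exact Finset.sum_congr rfl fun _ _ => mul_comm _ _

private lemma reprMulVec (M : Matrix n n ℝ) (hM : M.IsHermitian) (f : EuclideanSpace ℝ n)
    (i : n) :
    hM.eigenvectorBasis.repr (WithLp.toLp 2 (M *ᵥ f : n → ℝ)) i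
      = hM.eigenvalues i * hM.eigenvectorBasis.repr f i := by
  rw [OrthonormalBasis.repr_apply_apply, OrthonormalBasis.repr_apply_apply,
    innerDot, innerDot, WithLp.ofLp_toLp, Matrix.dotProduct_mulVec, ← Matrix.mulVec_transpose]
  have ht : Mᵀ = M := by
    have := hM.eq; rwa [Matrix.conjTranspose_eq_transpose_of_trivial] at this
  rw [ht]
  have h2 : M *ᵥ ⇑(hM.eigenvectorBasis i) ⬝ᵥ (f : n → ℝ)
      = hM.eigenvalues i * (⇑(hM.eigenvectorBasis i) ⬝ᵥ (f : n → ℝ)) := by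
    rw [hM.mulVec_eigenvectorBasis]; simp [smul_dotProduct]
  exact h2

private lemma quadLe (M : Matrix n n ℝ) (hM : M.IsHermitian) (lam : ℝ) (f : n → ℝ)
    (h : ∀ i, hM.eigenvectorBasis.repr (WithLp.toLp 2 f) i = 0 ∨ hM.eigenvalues i ≤ lam) :
    f ⬝ᵥ (M *ᵥ f) ≤ lam * (f ⬝ᵥ f) ∧ (f ⬝ᵥ (M *ᵥ f) = lam * (f ⬝ᵥ f) ↔ M *ᵥ f = lam • f) := by
  set b := hM.eigenvectorBasis with hb
  set g : n → ℝ := fun i => b.repr (WithLp.toLp 2 f) i with hg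
  set E : n → ℝ := hM.eigenvalues with hE
  have hsmul : ∀ i, b.repr (WithLp.toLp 2 (lam • f : n → ℝ)) i
      = lam * b.repr (WithLp.toLp 2 f) i := by
    intro i
    have h0 : (WithLp.toLp 2 (lam • f : n → ℝ)) = lam • (WithLp.toLp 2 f) := rfl
    rw [h0, _root_.map_smul]
    rfl
  have hinner : ∀ u v : EuclideanSpace ℝ n, (inner ℝ u v : ℝ) = ∑ i, b.repr u i * b.repr v i := by
    intro u v
    rw [← b.repr.inner_map_map u v, innerDot]
    rfl
  have hΦ : f ⬝ᵥ (M *ᵥ f) = ∑ i, E i * g i ^ 2 := by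
    rw [show f ⬝ᵥ (M *ᵥ f) = inner ℝ (WithLp.toLp 2 f) (WithLp.toLp 2 (M *ᵥ f : n → ℝ)) from
      (innerDot (WithLp.toLp 2 f) (WithLp.toLp 2 (M *ᵥ f : n → ℝ))).symm, hinner]
    refine Finset.sum_congr rfl fun i _ => ?_
    rw [reprMulVec M hM]
    ring
  have hS : f ⬝ᵥ f = ∑ i, g i ^ 2 := by
    rw [show f ⬝ᵥ f = inner ℝ (WithLp.toLp 2 f) (WithLp.toLp 2 f) from (innerDot (WithLp.toLp 2 f) (WithLp.toLp 2 f)).symm, hinner]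
    refine Finset.sum_congr rfl fun i _ => ?_
    ring
  have hterm : ∀ i ∈ Finset.univ, 0 ≤ (lam - E i) * g i ^ 2 := by
    intro i _
    rcases h i with h0 | hle
    · rw [show g i = 0 from h0]; simp
    · nlinarith [sq_nonneg (g i)]
  have hdiff : lam * (f ⬝ᵥ f) - f ⬝ᵥ (M *ᵥ f) = ∑ i, (lam - E i) * g i ^ 2 := by
    rw [hΦ, hS, Finset.mul_sum, ← Finset.sum_sub_distrib]
    refine Finset.sum_congr rfl fun i _ => by ring
  constructor
  · nlinarith [Finset.sum_nonneg hterm, hdiff]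
  · rw [show (f ⬝ᵥ (M *ᵥ f) = lam * (f ⬝ᵥ f)) ↔ (lam * (f ⬝ᵥ f) - f ⬝ᵥ (M *ᵥ f) = 0) by
      constructor <;> intro <;> linarith]
    rw [hdiff, Finset.sum_eq_zero_iff_of_nonneg hterm]
    have heq : ∀ i, ((lam - E i) * g i ^ 2 = 0 ↔ E i * g i = lam * g i) := by
      intro i
      constructor
      · intro h0
        rcases mul_eq_zero.mp h0 with h1 | h2
        · nlinarith
        · have : g i = 0 := by nlinarith
          rw [this]; ring
      · intro h1
        have : (lam - E i) * g i = 0 := by linarith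
        rcases mul_eq_zero.mp this with h2 | h3
        · rw [h2]; ring
        · rw [h3]; ring
    constructor
    · intro hall
      have : b.repr (WithLp.toLp 2 (M *ᵥ f : n → ℝ))
          = b.repr (WithLp.toLp 2 (lam • f : n → ℝ)) := by
        ext i
        rw [reprMulVec M hM, hsmul i]
        exact (heq i).mp (hall i (Finset.mem_univ i))
      exact congrArg WithLp.ofLp (b.repr.injective this)
    · intro hMf i _
      refine (heq i).mpr ?_
      have : b.repr (WithLp.toLp 2 (M *ᵥ f : n → ℝ)) i
          = b.repr (WithLp.toLp 2 (lam • f : n → ℝ)) i := by rw [hMf]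
      rw [reprMulVec M hM] at this
      rw [this, hsmul i]

private lemma quadGe (M : Matrix n n ℝ) (hM : M.IsHermitian) (lam : ℝ) (f : n → ℝ)
    (h : ∀ i, lam ≤ hM.eigenvalues i) :
    lam * (f ⬝ᵥ f) ≤ f ⬝ᵥ (M *ᵥ f) ∧ (f ⬝ᵥ (M *ᵥ f) = lam * (f ⬝ᵥ f) ↔ M *ᵥ f = lam • f) := by
  set b := hM.eigenvectorBasis with hb
  set g : n → ℝ := fun i => b.repr (WithLp.toLp 2 f) i with hg
  set E : n → ℝ := hM.eigenvalues with hE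
  have hsmul : ∀ i, b.repr (WithLp.toLp 2 (lam • f : n → ℝ)) i
      = lam * b.repr (WithLp.toLp 2 f) i := by
    intro i
    have h0 : (WithLp.toLp 2 (lam • f : n → ℝ)) = lam • (WithLp.toLp 2 f) := rfl
    rw [h0, _root_.map_smul]
    rfl
  have hinner : ∀ u v : EuclideanSpace ℝ n, (inner ℝ u v : ℝ) = ∑ i, b.repr u i * b.repr v i := by
    intro u v
    rw [← b.repr.inner_map_map u v, innerDot]
    rfl
  have hΦ : f ⬝ᵥ (M *ᵥ f) = ∑ i, E i * g i ^ 2 := by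
    rw [show f ⬝ᵥ (M *ᵥ f) = inner ℝ (WithLp.toLp 2 f) (WithLp.toLp 2 (M *ᵥ f : n → ℝ)) from
      (innerDot (WithLp.toLp 2 f) (WithLp.toLp 2 (M *ᵥ f : n → ℝ))).symm, hinner]
    refine Finset.sum_congr rfl fun i _ => ?_
    rw [reprMulVec M hM]
    ring
  have hS : f ⬝ᵥ f = ∑ i, g i ^ 2 := by
    rw [show f ⬝ᵥ f = inner ℝ (WithLp.toLp 2 f) (WithLp.toLp 2 f) from (innerDot (WithLp.toLp 2 f) (WithLp.toLp 2 f)).symm, hinner]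
    refine Finset.sum_congr rfl fun i _ => ?_
    ring
  have hterm : ∀ i ∈ Finset.univ, 0 ≤ (E i - lam) * g i ^ 2 := by
    intro i _
    nlinarith [sq_nonneg (g i), h i]
  have hdiff : f ⬝ᵥ (M *ᵥ f) - lam * (f ⬝ᵥ f) = ∑ i, (E i - lam) * g i ^ 2 := by
    rw [hΦ, hS, Finset.mul_sum, ← Finset.sum_sub_distrib]
    refine Finset.sum_congr rfl fun i _ => by ring
  constructor
  · nlinarith [Finset.sum_nonneg hterm, hdiff]
  · rw [show (f ⬝ᵥ (M *ᵥ f) = lam * (f ⬝ᵥ f)) ↔ (f ⬝ᵥ (M *ᵥ f) - lam * (f ⬝ᵥ f) = 0) by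
      constructor <;> intro <;> linarith]
    rw [hdiff, Finset.sum_eq_zero_iff_of_nonneg hterm]
    have heq : ∀ i, ((E i - lam) * g i ^ 2 = 0 ↔ E i * g i = lam * g i) := by
      intro i
      constructor
      · intro h0
        rcases mul_eq_zero.mp h0 with h1 | h2
        · nlinarith
        · have : g i = 0 := by nlinarith
          rw [this]; ring
      · intro h1
        have : (E i - lam) * g i = 0 := by linarith
        rcases mul_eq_zero.mp this with h2 | h3
        · rw [h2]; ring
        · rw [h3]; ring
    constructor
    · intro hall
      have : b.repr (WithLp.toLp 2 (M *ᵥ f : n → ℝ))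
          = b.repr (WithLp.toLp 2 (lam • f : n → ℝ)) := by
        ext i
        rw [reprMulVec M hM, hsmul i]
        exact (heq i).mp (hall i (Finset.mem_univ i))
      exact congrArg WithLp.ofLp (b.repr.injective this)
    · intro hMf i _
      refine (heq i).mpr ?_
      have : b.repr (WithLp.toLp 2 (M *ᵥ f : n → ℝ)) i
          = b.repr (WithLp.toLp 2 (lam • f : n → ℝ)) i := by rw [hMf]
      rw [reprMulVec M hM] at this
      rw [this, hsmul i]

end Aux

open Matrix

/-- Haemers-type two-sided bound for `e(C,C)`, with equality characterized by
equitable partitions with eigenvalue `λ_k` resp. `λ₁`. -/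
theorem internal_edges_bounds_and_equitable
    {V : Type*} [Fintype V] (G : SimpleGraph V) [DecidableRel G.Adj]
    (r : ℕ) (hconn : G.Connected) (hreg : G.IsRegularOfDegree r)
    (hn : 2 ≤ Fintype.card V)
    (lam1 lamk : ℝ)
    (h1eig : ∃ g : V → ℝ, g ≠ 0 ∧ (G.adjMatrix ℝ).mulVec g = lam1 • g)
    (h1lt : lam1 < (r : ℝ))
    (h1max : ∀ μ : ℝ,
      (∃ g : V → ℝ, g ≠ 0 ∧ (G.adjMatrix ℝ).mulVec g = μ • g) →
      μ ≠ (r : ℝ) → μ ≤ lam1)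
    (hkeig : ∃ g : V → ℝ, g ≠ 0 ∧ (G.adjMatrix ℝ).mulVec g = lamk • g)
    (hkmin : ∀ μ : ℝ,
      (∃ g : V → ℝ, g ≠ 0 ∧ (G.adjMatrix ℝ).mulVec g = μ • g) → lamk ≤ μ)
    (C : Finset V) (hC : C.Nonempty) (hCc : Cᶜ.Nonempty) :
    (lamk * C.card + ((r : ℝ) - lamk) * C.card ^ 2 / Fintype.card V
        ≤ ∑ x ∈ C, ((C.filter fun y => G.Adj x y).card : ℝ)) ∧
    ((∑ x ∈ C, ((C.filter fun y => G.Adj x y).card : ℝ))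
        ≤ lam1 * C.card + ((r : ℝ) - lam1) * C.card ^ 2 / Fintype.card V) ∧
    ((∑ x ∈ C, ((C.filter fun y => G.Adj x y).card : ℝ))
        = lamk * C.card + ((r : ℝ) - lamk) * C.card ^ 2 / Fintype.card V ↔
      ∃ q11 q12 q21 q22 : ℝ,
        (∀ x ∈ C, ((C.filter fun y => G.Adj x y).card : ℝ) = q11 ∧
                  ((Cᶜ.filter fun y => G.Adj x y).card : ℝ) = q12) ∧
        (∀ x ∈ Cᶜ, ((C.filter fun y => G.Adj x y).card : ℝ) = q21 ∧
                   ((Cᶜ.filter fun y => G.Adj x y).card : ℝ) = q22) ∧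
        q11 + q22 - (r : ℝ) = lamk) ∧
    ((∑ x ∈ C, ((C.filter fun y => G.Adj x y).card : ℝ))
        = lam1 * C.card + ((r : ℝ) - lam1) * C.card ^ 2 / Fintype.card V ↔
      ∃ q11 q12 q21 q22 : ℝ,
        (∀ x ∈ C, ((C.filter fun y => G.Adj x y).card : ℝ) = q11 ∧
                  ((Cᶜ.filter fun y => G.Adj x y).card : ℝ) = q12) ∧
        (∀ x ∈ Cᶜ, ((C.filter fun y => G.Adj x y).card : ℝ) = q21 ∧
                   ((Cᶜ.filter fun y => G.Adj x y).card : ℝ) = q22) ∧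
        q11 + q22 - (r : ℝ) = lam1) := by
  classical
  set M := G.adjMatrix ℝ with hMdef
  have hM : M.IsHermitian := by
    rw [Matrix.IsHermitian, Matrix.conjTranspose_eq_transpose_of_trivial]
    exact SimpleGraph.isSymm_adjMatrix G
  set n : ℝ := (Fintype.card V : ℝ) with hn_def
  set c : ℝ := (C.card : ℝ) with hc_def
  have hn0 : (0 : ℝ) < n := by
    rw [hn_def]; exact_mod_cast lt_of_lt_of_le two_pos hn
  have hnne : n ≠ 0 := ne_of_gt hn0
  set f : V → ℝ := fun x => (if x ∈ C then 1 else 0) - c / n with hf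
  set dC : V → ℝ := fun x => ((C.filter fun y => G.Adj x y).card : ℝ) with hdCdef
  set dCc : V → ℝ := fun x => ((Cᶜ.filter fun y => G.Adj x y).card : ℝ) with hdCcdef
  -- degree split
  have hdeg : ∀ x, dC x + dCc x = (r : ℝ) := by
    intro x
    have hsplit : (C.filter fun y => G.Adj x y) ∪ (Cᶜ.filter fun y => G.Adj x y)
        = univ.filter fun y => G.Adj x y := by
      rw [← Finset.filter_union, Finset.union_compl]
    have hdisj : Disjoint (C.filter fun y => G.Adj x y) (Cᶜ.filter fun y => G.Adj x y) :=
      Finset.disjoint_filter_filter disjoint_compl_right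
    have hcard := Finset.card_union_of_disjoint hdisj
    rw [hsplit] at hcard
    have hdeg' : (univ.filter fun y => G.Adj x y).card = r := by
      rw [← SimpleGraph.neighborFinset_eq_filter]; exact hreg x
    rw [hdeg'] at hcard
    simp only [hdCdef, hdCcdef]
    exact_mod_cast hcard.symm
  -- pointwise formula for M *ᵥ f
  have hMfx : ∀ x, (M *ᵥ f) x = dC x - (r : ℝ) * (c / n) := by
    intro x
    rw [hMdef, SimpleGraph.adjMatrix_mulVec_apply]
    have h1 : ∑ y ∈ G.neighborFinset x, f y
        = (∑ y ∈ G.neighborFinset x, (if y ∈ C then (1 : ℝ) else 0))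
          - ((G.neighborFinset x).card : ℝ) * (c / n) := by
      rw [hf]
      rw [Finset.sum_sub_distrib, Finset.sum_const, nsmul_eq_mul]
    rw [h1]
    have h2 : ∑ y ∈ G.neighborFinset x, (if y ∈ C then (1 : ℝ) else 0) = dC x := by
      rw [Finset.sum_boole, hdCdef]
      congr 2
      ext y
      simp [SimpleGraph.mem_neighborFinset, and_comm]
    have h3 : ((G.neighborFinset x).card : ℝ) = (r : ℝ) := by
      exact_mod_cast congrArg (Nat.cast : ℕ → ℝ) (hreg x)
    rw [h2, h3]
  -- sum of f is zero
  have hsum_ite : ∑ x : V, (if x ∈ C then (1 : ℝ) else 0) = c := by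
    rw [Finset.sum_boole, hc_def]
    congr 2
    simp [Finset.filter_mem_eq_inter]
  have hsumf : ∑ x : V, f x = 0 := by
    rw [hf]
    rw [Finset.sum_sub_distrib, hsum_ite, Finset.sum_const, nsmul_eq_mul, Finset.card_univ]
    rw [← hn_def]
    rw [mul_comm, div_mul_cancel₀ c hnne, sub_self]
  -- sum of dC over all vertices
  have hdC_sum_eq : ∀ x, dC x = ∑ y ∈ C, (if G.Adj x y then (1 : ℝ) else 0) := by
    intro x; rw [Finset.sum_boole, hdCdef]
  have hsumdC : ∑ x : V, dC x = (r : ℝ) * c := by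
    calc ∑ x : V, dC x = ∑ x : V, ∑ y ∈ C, (if G.Adj x y then (1 : ℝ) else 0) :=
          Finset.sum_congr rfl fun x _ => hdC_sum_eq x
      _ = ∑ y ∈ C, ∑ x : V, (if G.Adj x y then (1 : ℝ) else 0) := Finset.sum_comm
      _ = ∑ y ∈ C, (r : ℝ) := by
          refine Finset.sum_congr rfl fun y _ => ?_
          rw [Finset.sum_boole]
          have : (univ.filter fun x => G.Adj x y) = univ.filter fun x => G.Adj y x := by
            apply Finset.filter_congr; intro x _; simp [SimpleGraph.adj_comm]
          rw [this, ← SimpleGraph.neighborFinset_eq_filter]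
          exact_mod_cast congrArg (Nat.cast : ℕ → ℝ) (hreg y)
      _ = (r : ℝ) * c := by rw [Finset.sum_const, nsmul_eq_mul, ← hc_def, mul_comm]
  have hsum_ite_dC : ∑ x : V, (if x ∈ C then (1 : ℝ) else 0) * dC x = ∑ x ∈ C, dC x := by
    have hb : ∀ x, (if x ∈ C then (1 : ℝ) else 0) * dC x = if x ∈ C then dC x else 0 := by
      intro x; split <;> simp
    rw [Finset.sum_congr rfl fun x _ => hb x, ← Finset.sum_filter]
    apply Finset.sum_congr
    · simp [Finset.filter_mem_eq_inter]
    · intros; rfl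
  -- quadratic form value
  have hPhi : f ⬝ᵥ (M *ᵥ f) = (∑ x ∈ C, dC x) - (r : ℝ) * c ^ 2 / n := by
    have h1 : f ⬝ᵥ (M *ᵥ f) = ∑ x : V, f x * (dC x - (r : ℝ) * (c / n)) := by
      refine Finset.sum_congr rfl fun x _ => ?_
      rw [hMfx x]
    rw [h1]
    have h2 : ∀ x : V, f x * (dC x - (r : ℝ) * (c / n))
        = (if x ∈ C then (1 : ℝ) else 0) * dC x - (c / n) * dC x
          - ((r : ℝ) * (c / n)) * f x := by
      intro x; rw [hf]; ring
    rw [Finset.sum_congr rfl fun x _ => h2 x]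
    rw [Finset.sum_sub_distrib, Finset.sum_sub_distrib, ← Finset.mul_sum, ← Finset.mul_sum,
      hsumf, hsumdC, hsum_ite_dC, mul_zero]
    field_simp
    ring
  -- norm value
  have hSval : f ⬝ᵥ f = c - c ^ 2 / n := by
    have h2 : ∀ x : V, f x * f x
        = (if x ∈ C then (1 : ℝ) else 0) * (1 - 2 * (c / n)) + (c / n) ^ 2 := by
      intro x; rw [hf]; by_cases hx : x ∈ C <;> simp [hx] <;> ring
    calc f ⬝ᵥ f = ∑ x : V, ((if x ∈ C then (1 : ℝ) else 0) * (1 - 2 * (c / n)) + (c / n) ^ 2) :=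
          Finset.sum_congr rfl fun x _ => h2 x
      _ = c * (1 - 2 * (c / n)) + n * (c / n) ^ 2 := by
          rw [Finset.sum_add_distrib, ← Finset.sum_mul, hsum_ite, Finset.sum_const,
            nsmul_eq_mul, Finset.card_univ, ← hn_def]
      _ = c - c ^ 2 / n := by field_simp; ring
  -- eigenvector facts
  have heigvec : ∀ i, ∃ g : V → ℝ, g ≠ 0 ∧ M *ᵥ g = hM.eigenvalues i • g := by
    intro i
    exact ⟨⇑(hM.eigenvectorBasis i), fun h0 => hM.eigenvectorBasis.toBasis.ne_zero i (by simpa using h0),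
      hM.mulVec_eigenvectorBasis i⟩
  have hkAll : ∀ i, lamk ≤ hM.eigenvalues i := fun i => hkmin _ (heigvec i)
  have h1All : ∀ i, hM.eigenvectorBasis.repr (WithLp.toLp 2 f) i = 0
      ∨ hM.eigenvalues i ≤ lam1 := by
    intro i
    by_cases hEr : hM.eigenvalues i = (r : ℝ)
    · left
      have hMw := hM.mulVec_eigenvectorBasis i
      rw [hEr] at hMw
      set w : V → ℝ := ⇑(hM.eigenvectorBasis i) with hw
      have hlap : Matrix.toLin' (G.lapMatrix ℝ) w = 0 := by
        rw [Matrix.toLin'_apply]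
        ext x
        rw [SimpleGraph.lapMatrix_mulVec_apply]
        have h1 : (∑ u ∈ G.neighborFinset x, w u) = (M *ᵥ w) x :=
          (SimpleGraph.adjMatrix_mulVec_apply _ _ _).symm
        rw [h1, hMw]
        simp [hreg x]
      have hconst := (G.lapMatrix_mulVec_eq_zero_iff_forall_reachable (x := w)).mp (by simpa [Matrix.toLin'_apply] using hlap)
      obtain ⟨v0⟩ := hconn.nonempty
      have hr1 : hM.eigenvectorBasis.repr (WithLp.toLp 2 f) i = ∑ x : V, w x * f x := by
        rw [OrthonormalBasis.repr_apply_apply, innerDot]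
        rfl
      rw [hr1]
      have hr2 : ∑ x : V, w x * f x = w v0 * ∑ x : V, f x := by
        rw [Finset.mul_sum]
        exact Finset.sum_congr rfl fun x _ => by
          rw [hconst x v0 (hconn.preconnected x v0)]
      rw [hr2, hsumf, mul_zero]
    · exact Or.inr (h1max _ (heigvec i) hEr)
  obtain ⟨hle1, hiff1⟩ := quadLe M hM lam1 f h1All
  obtain ⟨hgek, hiffk⟩ := quadGe M hM lamk f hkAll
  -- bridge
  have hbridge : ∀ lam : ℝ, lam * c + ((r : ℝ) - lam) * c ^ 2 / n
      = lam * (f ⬝ᵥ f) + (r : ℝ) * c ^ 2 / n := by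
    intro lam; rw [hSval]; field_simp; ring
  have hEqiff : ∀ lam : ℝ, ((∑ x ∈ C, dC x) = lam * c + ((r : ℝ) - lam) * c ^ 2 / n
      ↔ f ⬝ᵥ (M *ᵥ f) = lam * (f ⬝ᵥ f)) := by
    intro lam
    rw [hbridge lam]
    constructor <;> intro h <;> [linarith [hPhi]; linarith [hPhi]]
  -- equitable from eigenvector equation
  have equit_of_eig : ∀ lam : ℝ, M *ᵥ f = lam • f →
      ∃ q11 q12 q21 q22 : ℝ,
        (∀ x ∈ C, dC x = q11 ∧ dCc x = q12) ∧
        (∀ x ∈ Cᶜ, dC x = q21 ∧ dCc x = q22) ∧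
        q11 + q22 - (r : ℝ) = lam := by
    intro lam hMf'
    refine ⟨lam * (1 - c / n) + (r : ℝ) * (c / n),
      (r : ℝ) - (lam * (1 - c / n) + (r : ℝ) * (c / n)),
      ((r : ℝ) - lam) * (c / n), (r : ℝ) - ((r : ℝ) - lam) * (c / n), ?_, ?_, by ring⟩
    · intro x hx
      have h1 : (M *ᵥ f) x = lam * f x := by rw [hMf']; rfl
      rw [hMfx x] at h1
      have h2 : f x = 1 - c / n := by rw [hf]; simp [hx]
      rw [h2] at h1
      have hq : dC x = lam * (1 - c / n) + (r : ℝ) * (c / n) := by linarith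
      exact ⟨hq, by have := hdeg x; linarith⟩
    · intro x hx
      have hxC : x ∉ C := Finset.mem_compl.mp hx
      have h1 : (M *ᵥ f) x = lam * f x := by rw [hMf']; rfl
      rw [hMfx x] at h1
      have h2 : f x = -(c / n) := by rw [hf]; simp [hxC]
      rw [h2] at h1
      have hq : dC x = ((r : ℝ) - lam) * (c / n) := by linarith
      exact ⟨hq, by have := hdeg x; linarith⟩
  -- equality from equitable
  have eq_of_equit : ∀ lam : ℝ,
      (∃ q11 q12 q21 q22 : ℝ,
        (∀ x ∈ C, dC x = q11 ∧ dCc x = q12) ∧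
        (∀ x ∈ Cᶜ, dC x = q21 ∧ dCc x = q22) ∧
        q11 + q22 - (r : ℝ) = lam) →
      (∑ x ∈ C, dC x) = lam * c + ((r : ℝ) - lam) * c ^ 2 / n := by
    rintro lam ⟨q11, q12, q21, q22, hA, hB, hlam⟩
    obtain ⟨x0, hx0⟩ := hC
    obtain ⟨y0, hy0⟩ := hCc
    have h1 : q11 + q12 = (r : ℝ) := by
      have := hdeg x0; rw [(hA x0 hx0).1, (hA x0 hx0).2] at this; exact this
    have h2 : q21 + q22 = (r : ℝ) := by
      have := hdeg y0; rw [(hB y0 hy0).1, (hB y0 hy0).2] at this; exact this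
    have hcc : ((Cᶜ.card : ℕ) : ℝ) = n - c := by
      have h := Finset.card_add_card_compl C
      have h' := congrArg (Nat.cast : ℕ → ℝ) h
      push_cast at h'
      rw [hn_def, hc_def]
      linarith
    have hcount : c * q12 = (n - c) * q21 := by
      have hL : ∑ x ∈ C, dCc x = c * q12 := by
        rw [Finset.sum_congr rfl (fun x hx => (hA x hx).2), Finset.sum_const,
          nsmul_eq_mul, ← hc_def]
      have hR : ∑ x ∈ Cᶜ, dC x = (n - c) * q21 := by
        rw [Finset.sum_congr rfl (fun x hx => (hB x hx).1), Finset.sum_const,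
          nsmul_eq_mul, hcc]
      have hswap : ∑ x ∈ C, dCc x = ∑ x ∈ Cᶜ, dC x := by
        have hL2 : ∀ x, dCc x = ∑ y ∈ Cᶜ, (if G.Adj x y then (1 : ℝ) else 0) := by
          intro x; rw [Finset.sum_boole, hdCcdef]
        calc ∑ x ∈ C, dCc x = ∑ x ∈ C, ∑ y ∈ Cᶜ, (if G.Adj x y then (1 : ℝ) else 0) :=
              Finset.sum_congr rfl fun x _ => hL2 x
          _ = ∑ y ∈ Cᶜ, ∑ x ∈ C, (if G.Adj x y then (1 : ℝ) else 0) := Finset.sum_comm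
          _ = ∑ y ∈ Cᶜ, ∑ x ∈ C, (if G.Adj y x then (1 : ℝ) else 0) := by
              refine Finset.sum_congr rfl fun y _ => Finset.sum_congr rfl fun x _ => ?_
              simp [SimpleGraph.adj_comm]
          _ = ∑ y ∈ Cᶜ, dC y := by
              refine Finset.sum_congr rfl fun y _ => ?_
              rw [hdC_sum_eq y]
      linarith
    have hsumq : ∑ x ∈ C, dC x = c * q11 := by
      rw [Finset.sum_congr rfl (fun x hx => (hA x hx).1), Finset.sum_const,
        nsmul_eq_mul, ← hc_def]
    rw [hsumq]
    have key : n * q11 = c * (r : ℝ) + (n - c) * lam := by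
      linear_combination -hcount + c * h1 - (n - c) * h2 + (n - c) * hlam
    field_simp
    linear_combination c * key
  -- assemble
  have he' : (∑ x ∈ C, ((C.filter fun y => G.Adj x y).card : ℝ)) = ∑ x ∈ C, dC x := rfl
  refine ⟨?_, ?_, ?_, ?_⟩
  · rw [he']
    have := hbridge lamk
    linarith [hgek, hPhi]
  · rw [he']
    have := hbridge lam1
    linarith [hle1, hPhi]
  · rw [he']
    constructor
    · intro heq
      exact equit_of_eig lamk (hiffk.mp ((hEqiff lamk).mp heq))
    · intro hqt
      exact eq_of_equit lamk hqt
  · rw [he']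
    constructor
    · intro heq
      exact equit_of_eig lam1 (hiff1.mp ((hEqiff lam1).mp heq))
    · intro hqt
      exact eq_of_equit lam1 hqt
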